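/- Let M be a real n×n matrix such that, viewed as a complex matrix, M has no eigenvalue of absolute value 1, let h ∈ ℝ^n, and define the orbit z_{n+1} = M z_n + h from an initial point z_0. If the orbit (z_n) is bounded, then it converges to the unique fixed point z* = (I − M)⁻¹ h of the affine map z ↦ M z + h. -/

import Mathlib

open Matrix Filter Topology

section Aux
open Polynomial

-- Lemma A: spectral radius < 1 implies powers tend to zero in norm
lemma pow_norm_tendsto_zero {A : Type*} [NormedRing A] [NormedAlgebra ℂ A] [CompleteSpace A]
    (a : A) (ha : spectralRadius ℂ a < 1) :
    Tendsto (fun k : ℕ => ‖a ^ k‖) atTop (𝓝 0) := by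
  obtain ⟨r, hr1, hr2⟩ := ENNReal.lt_iff_exists_nnreal_btwn.mp ha
  have hgel := spectrum.pow_nnnorm_pow_one_div_tendsto_nhds_spectralRadius a
  have hev : ∀ᶠ k : ℕ in atTop, (‖a ^ k‖₊ : ENNReal) ^ (1 / (k:ℕ) : ℝ) < (r : ENNReal) :=
    hgel.eventually_lt_const hr1
  have hr' : (r : ℝ) < 1 := by exact_mod_cast ENNReal.coe_lt_one_iff.mp hr2
  have hev2 : ∀ᶠ k in atTop, ‖a ^ k‖ ≤ (r : ℝ) ^ k := by
    filter_upwards [hev, eventually_ge_atTop 1] with k hk hk1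
    have hk0 : (k : ℝ) ≠ 0 := by positivity
    have : ((‖a ^ k‖₊ : ENNReal) ^ (1 / (k:ℝ))) ^ (k : ℝ) ≤ ((r : ENNReal)) ^ (k:ℝ) :=
      ENNReal.rpow_le_rpow hk.le (by positivity)
    rw [← ENNReal.rpow_mul, one_div, inv_mul_cancel₀ hk0, ENNReal.rpow_one,
      ENNReal.rpow_natCast] at this
    rw [← ENNReal.coe_pow, ENNReal.coe_le_coe] at this
    calc ‖a ^ k‖ = ((‖a ^ k‖₊ : ℝ)) := rfl
    _ ≤ ((r ^ k : NNReal) : ℝ) := by exact_mod_cast this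
    _ = (r:ℝ) ^ k := by push_cast; ring
  have h0 : Tendsto (fun k : ℕ => (r:ℝ) ^ k) atTop (𝓝 0) :=
    tendsto_pow_atTop_nhds_zero_of_lt_one r.coe_nonneg hr'
  exact squeeze_zero' (Eventually.of_forall fun k => norm_nonneg _) hev2 h0

variable {E : Type*} [NormedAddCommGroup E] [NormedSpace ℂ E] [FiniteDimensional ℂ E]

/-- Algebra equivalence between endomorphisms and continuous endomorphisms in finite dim. -/
noncomputable def endCLM : (Module.End ℂ E) ≃ₐ[ℂ] (E →L[ℂ] E) :=
  AlgEquiv.ofLinearEquiv (LinearMap.toContinuousLinearMap) rfl (fun f g => by ext x; rfl)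

lemma endCLM_apply (f : Module.End ℂ E) (x : E) : endCLM f x = f x := rfl

lemma endCLM_pow_apply (f : Module.End ℂ E) (k : ℕ) (x : E) :
    ((endCLM f) ^ k) x = (f ^ k) x := by
  rw [← map_pow]; rfl

-- spectral radius bound from a finite superset of the spectrum
lemma specRad_lt_one {A : Type*} [NormedRing A] [NormedAlgebra ℂ A] (a : A)
    (T : Finset ℂ) (hT : spectrum ℂ a ⊆ ↑T) (h1 : ∀ x ∈ T, ‖x‖₊ < 1) :
    spectralRadius ℂ a < 1 := by
  have : spectralRadius ℂ a ≤ T.sup (fun x => (‖x‖₊ : ENNReal)) := by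
    rw [spectralRadius]
    exact iSup₂_le fun μ hμ => Finset.le_sup (f := fun x => (‖x‖₊ : ENNReal)) (hT hμ)
  refine lt_of_le_of_lt this ?_
  rw [Finset.sup_lt_iff (by norm_num)]
  intro x hx
  exact_mod_cast ENNReal.coe_lt_one_iff.mpr (h1 x hx)

lemma restrict_pow_apply (f : Module.End ℂ E) {S : Submodule ℂ E}
    (hf : ∀ x ∈ S, f x ∈ S) (k : ℕ) (x : S) :
    (((f.restrict hf) ^ k) x : E) = (f ^ k) (x : E) := by
  induction k generalizing x with
  | zero => rfl
  | succ k ih =>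
      rw [pow_succ, pow_succ f k, Module.End.mul_apply, Module.End.mul_apply,
        ih (f.restrict hf x), LinearMap.restrict_coe_apply]

-- spectrum of the restriction consists of roots of p
lemma eval_eq_zero_of_mem_spectrum_restrict (f : Module.End ℂ E) (p : ℂ[X])
    (hf : ∀ x ∈ LinearMap.ker (aeval f p), f x ∈ LinearMap.ker (aeval f p)) {μ : ℂ}
    (hμ : μ ∈ spectrum ℂ (f.restrict hf)) : p.eval μ = 0 := by
  have hev : Module.End.HasEigenvalue (f.restrict hf) μ :=
    Module.End.hasEigenvalue_iff_mem_spectrum.mpr hμ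
  obtain ⟨x, hx⟩ := hev.exists_hasEigenvector
  have hx0 : (x : E) ≠ 0 := fun hc => hx.right (Subtype.ext hc)
  have hfx : f (x : E) = μ • (x : E) := by
    have := congrArg (Subtype.val) (Module.End.mem_eigenspace_iff.mp hx.left)
    simpa [LinearMap.restrict_coe_apply] using this
  have hvec : f.HasEigenvector μ (x : E) :=
    ⟨Module.End.mem_eigenspace_iff.mpr hfx, hx0⟩
  have h0 : aeval f p (x : E) = 0 := x.property
  rw [Module.End.aeval_apply_of_hasEigenvector hvec] at h0
  exact (smul_eq_zero.mp h0).resolve_right hx0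

lemma aeval_commute_apply (f : Module.End ℂ E) (p : ℂ[X]) (x : E) :
    aeval f p (f x) = f (aeval f p x) := by
  have h : aeval f p * f = f * aeval f p := by
    calc aeval f p * f = aeval f p * aeval f X := by rw [aeval_X]
    _ = aeval f (p * X) := (map_mul _ _ _).symm
    _ = aeval f (X * p) := by rw [mul_comm]
    _ = aeval f X * aeval f p := map_mul _ _ _
    _ = f * aeval f p := by rw [aeval_X]
  have := congrArg (fun g : Module.End ℂ E => g x) h
  simpa [Module.End.mul_apply, aeval_X] using this

lemma mem_of_eval_prod_eq_zero (m : Multiset ℂ) (μ : ℂ)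
    (h : ((m.map fun r => X - C r).prod).eval μ = 0) : μ ∈ m := by
  rw [eval_multiset_prod, Multiset.map_map] at h
  obtain ⟨x, hx, hx0⟩ := Multiset.mem_map.mp (Multiset.prod_eq_zero_iff.mp h)
  have : μ = x := by
    have := sub_eq_zero.mp (show μ - x = 0 by simpa using hx0)
    exact this
  exact this ▸ hx

lemma ker_invariant (f : Module.End ℂ E) (p : ℂ[X]) :
    ∀ x ∈ LinearMap.ker (aeval f p), f x ∈ LinearMap.ker (aeval f p) := by
  intro x hx
  rw [LinearMap.mem_ker] at hx ⊢
  rw [aeval_commute_apply, hx, map_zero]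

lemma stable_tendsto_zero [CompleteSpace E] (f : Module.End ℂ E) (m : Multiset ℂ)
    (hm : ∀ r ∈ m, ‖r‖ < 1) (v : E)
    (hv : aeval f ((m.map fun r => X - C r).prod) v = 0) :
    Tendsto (fun k : ℕ => (f ^ k) v) atTop (𝓝 0) := by
  set p : ℂ[X] := (m.map fun r => X - C r).prod with hp
  set S := LinearMap.ker (aeval f p) with hS
  have hfS := ker_invariant f p
  set gS := f.restrict hfS with hgS
  set g' := endCLM gS with hg'
  have hsub : spectrum ℂ g' ⊆ ↑m.toFinset := by
    intro μ hμ
    rw [hg', AlgEquiv.spectrum_eq] at hμ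
    have he := eval_eq_zero_of_mem_spectrum_restrict f p hfS hμ
    rw [hp] at he
    exact Multiset.mem_toFinset.mpr (mem_of_eval_prod_eq_zero m μ he)
  have hrad : spectralRadius ℂ g' < 1 := by
    refine specRad_lt_one g' m.toFinset hsub fun x hx => ?_
    have := hm x (Multiset.mem_toFinset.mp hx)
    rw [← NNReal.coe_lt_coe]
    simpa using this
  have hpow := pow_norm_tendsto_zero g' hrad
  have hkey : ∀ k : ℕ, (f ^ k) v = (((g' ^ k) ⟨v, LinearMap.mem_ker.mpr hv⟩ : S) : E) := by
    intro k
    rw [endCLM_pow_apply, restrict_pow_apply]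
  rw [tendsto_zero_iff_norm_tendsto_zero]
  refine squeeze_zero (fun k => norm_nonneg _) (fun k => ?_)
    (by simpa using hpow.mul_const ‖(⟨v, LinearMap.mem_ker.mpr hv⟩ : S)‖)
  rw [hkey k]
  calc ‖(((g' ^ k) ⟨v, LinearMap.mem_ker.mpr hv⟩ : S) : E)‖ = ‖((g' ^ k) ⟨v, LinearMap.mem_ker.mpr hv⟩ : S)‖ := rfl
  _ ≤ ‖g' ^ k‖ * ‖(⟨v, LinearMap.mem_ker.mpr hv⟩ : S)‖ := ContinuousLinearMap.le_opNorm _ _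

lemma unstable_eq_zero [CompleteSpace E] (f : Module.End ℂ E) (m : Multiset ℂ)
    (hm : ∀ r ∈ m, 1 < ‖r‖) (v : E)
    (hv : aeval f ((m.map fun r => X - C r).prod) v = 0)
    (Cb : ℝ) (hb : ∀ k : ℕ, ‖(f ^ k) v‖ ≤ Cb) : v = 0 := by
  set p : ℂ[X] := (m.map fun r => X - C r).prod with hp
  set S := LinearMap.ker (aeval f p) with hS
  have hfS := ker_invariant f p
  set gS := f.restrict hfS with hgS
  set g' := endCLM gS with hg'
  have hsub : spectrum ℂ g' ⊆ ↑m.toFinset := by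
    intro μ hμ
    rw [hg', AlgEquiv.spectrum_eq] at hμ
    have he := eval_eq_zero_of_mem_spectrum_restrict f p hfS hμ
    rw [hp] at he
    exact Multiset.mem_toFinset.mpr (mem_of_eval_prod_eq_zero m μ he)
  have hunit : IsUnit g' := by
    rw [← spectrum.zero_notMem_iff ℂ]
    intro h0
    have := hm 0 (Multiset.mem_toFinset.mp (hsub h0))
    rw [norm_zero] at this
    linarith
  set u := hunit.unit with hu
  have hspec_inv : spectrum ℂ ((↑u⁻¹ : S →L[ℂ] S)) ⊆ ↑(m.toFinset.image fun x => x⁻¹) := by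
    intro μ hμ
    rw [← spectrum.map_inv] at hμ
    have hμinv : μ⁻¹ ∈ spectrum ℂ (u : S →L[ℂ] S) := Set.mem_inv.mp hμ
    rw [hunit.unit_spec] at hμinv
    refine Finset.mem_coe.mpr (Finset.mem_image.mpr ⟨μ⁻¹, hsub hμinv, inv_inv μ⟩)
  have hrad : spectralRadius ℂ ((↑u⁻¹ : S →L[ℂ] S)) < 1 := by
    refine specRad_lt_one _ _ hspec_inv fun x hx => ?_
    obtain ⟨r, hr, rfl⟩ := Finset.mem_image.mp hx
    have h1 := hm r (Multiset.mem_toFinset.mp hr)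
    have hr0 : r ≠ 0 := by rintro rfl; rw [norm_zero] at h1; linarith
    rw [← NNReal.coe_lt_coe]
    push_cast
    rw [norm_inv]
    rw [inv_lt_one_iff₀]
    right
    simpa using h1
  have hpow := pow_norm_tendsto_zero _ hrad
  set x : S := ⟨v, LinearMap.mem_ker.mpr hv⟩ with hx
  have hid : ∀ k : ℕ, ((↑u⁻¹ : S →L[ℂ] S) ^ k) ((g' ^ k) x) = x := by
    intro k
    have h1 : ((↑u⁻¹ : S →L[ℂ] S) ^ k) * ((g' ^ k)) = 1 := by
      rw [← hunit.unit_spec, ← Units.val_pow_eq_pow_val, ← Units.val_pow_eq_pow_val,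
        ← Units.val_mul, inv_pow, inv_mul_cancel, Units.val_one]
    calc ((↑u⁻¹ : S →L[ℂ] S) ^ k) ((g' ^ k) x)
        = (((↑u⁻¹ : S →L[ℂ] S) ^ k) * (g' ^ k)) x := rfl
    _ = x := by rw [h1]; rfl
  have hxle : ∀ k : ℕ, ‖x‖ ≤ ‖(↑u⁻¹ : S →L[ℂ] S) ^ k‖ * Cb := by
    intro k
    have hgb : ‖(g' ^ k) x‖ ≤ Cb := by
      have : (((g' ^ k) x : S) : E) = (f ^ k) v := by
        rw [hg', endCLM_pow_apply, restrict_pow_apply]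
      calc ‖(g' ^ k) x‖ = ‖(((g' ^ k) x : S) : E)‖ := rfl
      _ = ‖(f ^ k) v‖ := by rw [this]
      _ ≤ Cb := hb k
    calc ‖x‖ = ‖((↑u⁻¹ : S →L[ℂ] S) ^ k) ((g' ^ k) x)‖ := by rw [hid k]
    _ ≤ ‖(↑u⁻¹ : S →L[ℂ] S) ^ k‖ * ‖(g' ^ k) x‖ := ContinuousLinearMap.le_opNorm _ _
    _ ≤ ‖(↑u⁻¹ : S →L[ℂ] S) ^ k‖ * Cb := by
        exact mul_le_mul_of_nonneg_left hgb (norm_nonneg _)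
  have hx0 : ‖x‖ ≤ 0 := ge_of_tendsto (by simpa using hpow.mul_const Cb) (Eventually.of_forall hxle)
  have : x = 0 := norm_le_zero_iff.mp hx0
  exact congrArg Subtype.val this

lemma coprime_single (a : ℂ) (mu : Multiset ℂ) (h : ∀ b ∈ mu, a ≠ b) :
    IsCoprime (X - C a) ((mu.map fun r => X - C r).prod) := by
  induction mu using Multiset.induction_on with
  | empty => simpa using isCoprime_one_right
  | cons b s ih =>
      rw [Multiset.map_cons, Multiset.prod_cons]
      exact IsCoprime.mul_right
        (isCoprime_X_sub_C_of_isUnit_sub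
          ((sub_ne_zero.mpr (h b (Multiset.mem_cons_self b s))).isUnit))
        (ih fun c hc => h c (Multiset.mem_cons_of_mem hc))

lemma coprime_prods (ms mu : Multiset ℂ) (hd : ∀ a ∈ ms, ∀ b ∈ mu, a ≠ b) :
    IsCoprime ((ms.map fun r => X - C r).prod) ((mu.map fun r => X - C r).prod) := by
  induction ms using Multiset.induction_on with
  | empty => simpa using isCoprime_one_left
  | cons a s ih =>
      rw [Multiset.map_cons, Multiset.prod_cons]
      exact IsCoprime.mul_left
        (coprime_single a mu (hd a (Multiset.mem_cons_self a s)))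
        (ih fun c hc => hd c (Multiset.mem_cons_of_mem hc))

lemma key_complex [CompleteSpace E] (f : Module.End ℂ E)
    (hs : ∀ μ ∈ spectrum ℂ f, ‖μ‖ ≠ 1) (v : E) (Cb : ℝ)
    (hb : ∀ k : ℕ, ‖(f ^ k) v‖ ≤ Cb) :
    Tendsto (fun k : ℕ => (f ^ k) v) atTop (𝓝 0) := by
  classical
  have hint : IsIntegral ℂ f := LinearMap.isIntegral f
  have hmono : (minpoly ℂ f).Monic := minpoly.monic hint
  have hsplit : Splits (minpoly ℂ f) := IsAlgClosed.splits _
  set m : Multiset ℂ := (minpoly ℂ f).roots with hm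
  have hfact : minpoly ℂ f = (m.map fun a => X - C a).prod :=
    hsplit.eq_prod_roots_of_monic hmono
  have hroots : ∀ r ∈ m, ‖r‖ ≠ 1 := by
    intro r hr
    have h1 : (minpoly ℂ f).IsRoot r := isRoot_of_mem_roots hr
    have h2 : Module.End.HasEigenvalue f r := Module.End.hasEigenvalue_of_isRoot h1
    exact hs r (Module.End.hasEigenvalue_iff_mem_spectrum.mp h2)
  set ms : Multiset ℂ := m.filter (fun r => ‖r‖ < 1) with hms
  set mu : Multiset ℂ := m.filter (fun r => ¬ ‖r‖ < 1) with hmu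
  set p : ℂ[X] := (ms.map fun r => X - C r).prod with hp
  set q : ℂ[X] := (mu.map fun r => X - C r).prod with hq
  have hpq : p * q = minpoly ℂ f := by
    rw [hp, hq, ← Multiset.prod_add, ← Multiset.map_add, Multiset.filter_add_not, ← hfact]
  have hco : IsCoprime p q := by
    refine coprime_prods ms mu fun a ha b hbmem => ?_
    have h1 := Multiset.of_mem_filter ha
    have h2 := Multiset.of_mem_filter hbmem
    intro hc; exact h2 (hc ▸ h1)
  obtain ⟨a, b, hab⟩ := hco
  set vs : E := aeval f (b * q) v with hvs_def
  set vu : E := aeval f (a * p) v with hvu_def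
  have hsum : vu + vs = v := by
    rw [hvu_def, hvs_def, ← LinearMap.add_apply, ← map_add, hab, _root_.map_one, Module.End.one_apply]
  have hvs : aeval f p vs = 0 := by
    rw [hvs_def, ← Module.End.mul_apply, ← _root_.map_mul]
    have : p * (b * q) = b * (p * q) := by ring
    rw [this, hpq, _root_.map_mul, Module.End.mul_apply, minpoly.aeval, LinearMap.zero_apply, map_zero]
  have hvu : aeval f q vu = 0 := by
    rw [hvu_def, ← Module.End.mul_apply, ← _root_.map_mul]
    have : q * (a * p) = a * (p * q) := by ring
    rw [this, hpq, _root_.map_mul, Module.End.mul_apply, minpoly.aeval, LinearMap.zero_apply, map_zero]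
  have hstable : Tendsto (fun k : ℕ => (f ^ k) vs) atTop (𝓝 0) :=
    stable_tendsto_zero f ms (fun r hr => (Multiset.mem_filter.mp hr).2) vs hvs
  have hvu0 : vu = 0 := by
    obtain ⟨C', hC'⟩ := (hstable.norm.bddAbove_range)
    refine unstable_eq_zero f mu ?_ vu hvu (Cb + C') ?_
    · intro r hr
      have h1 := (Multiset.mem_filter.mp hr).2
      have h2 := hroots r (Multiset.mem_filter.mp hr).1
      exact lt_of_le_of_ne (not_lt.mp h1) (Ne.symm h2)
    · intro k
      have : (f ^ k) vu = (f ^ k) v - (f ^ k) vs := by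
        rw [← hsum]; rw [map_add]; abel
      rw [this]
      calc ‖(f ^ k) v - (f ^ k) vs‖ ≤ ‖(f ^ k) v‖ + ‖(f ^ k) vs‖ := norm_sub_le _ _
      _ ≤ Cb + C' := add_le_add (hb k)
            (hC' (Set.mem_range_self k))
  have hveq : v = vs := by rw [← hsum, hvu0, zero_add]
  rw [hveq]
  exact hstable

lemma key_matrix (n : ℕ) (A : Matrix (Fin n) (Fin n) ℂ)
    (hs : ∀ μ ∈ spectrum ℂ A, ‖μ‖ ≠ 1) (v : Fin n → ℂ) (Cb : ℝ)
    (hb : ∀ k : ℕ, ‖(A ^ k).mulVec v‖ ≤ Cb) :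
    Tendsto (fun k : ℕ => (A ^ k).mulVec v) atTop (𝓝 0) := by
  set f : Module.End ℂ (Fin n → ℂ) := Matrix.toLinAlgEquiv' A with hf
  have hsp : spectrum ℂ f = spectrum ℂ A := AlgEquiv.spectrum_eq _ _
  have hpowk : ∀ k : ℕ, (f ^ k) v = (A ^ k).mulVec v := by
    intro k
    rw [hf, ← map_pow, Matrix.toLinAlgEquiv'_apply]
  have := key_complex f (by rw [hsp]; exact hs) v Cb (fun k => by rw [hpowk]; exact hb k)
  exact this.congr fun k => hpowk k

end Aux

section Main
open Polynomial

/-- Let `Mat` be a real `n×n` matrix with no complex eigenvalue of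
absolute value 1, and let `z` be an orbit of the affine map `w ↦ Mat w + h`. If the orbit
is bounded, then it converges to the unique fixed point `(I - Mat)⁻¹ h`. -/
theorem stmt9 (n : ℕ) (Mat : Matrix (Fin n) (Fin n) ℝ) (h : Fin n → ℝ)
    (hspec : ∀ μ ∈ spectrum ℂ (Mat.map Complex.ofReal), ‖μ‖ ≠ 1)
    (z : ℕ → Fin n → ℝ) (horb : ∀ k : ℕ, z (k + 1) = Mat.mulVec (z k) + h)
    (hbdd : Bornology.IsBounded (Set.range z)) :
    Tendsto z atTop (𝓝 ((1 - Mat)⁻¹.mulVec h)) := by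
  set A : Matrix (Fin n) (Fin n) ℂ := Mat.map Complex.ofReal with hA
  have h1 : (1 : ℂ) ∉ spectrum ℂ A := fun hc => hspec 1 hc (by simp)
  have hunit : IsUnit (1 - A) := by
    have := spectrum.notMem_iff.mp h1
    simpa using this
  have hmap : (1 - Mat).map Complex.ofReal = 1 - A := by
    ext i j
    simp only [Matrix.map_apply, Matrix.sub_apply, Matrix.one_apply, hA]
    split_ifs <;> push_cast <;> ring
  have hdetR : IsUnit (1 - Mat).det := by
    rw [isUnit_iff_ne_zero]
    intro hc
    have hdetC : IsUnit (1 - A).det := (Matrix.isUnit_iff_isUnit_det _).mp hunit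
    rw [← hmap,
      show (1 - Mat).map Complex.ofReal = Complex.ofRealHom.mapMatrix (1 - Mat) from rfl,
      ← RingHom.map_det, hc, map_zero] at hdetC
    exact not_isUnit_zero hdetC
  set zs : Fin n → ℝ := (1 - Mat)⁻¹.mulVec h with hzs
  have hfix : Mat.mulVec zs + h = zs := by
    have hmul : (1 - Mat) * (1 - Mat)⁻¹ = 1 := Matrix.mul_nonsing_inv _ hdetR
    have h2 : (1 - Mat).mulVec zs = h := by
      rw [hzs, Matrix.mulVec_mulVec, hmul, Matrix.one_mulVec]
    rw [Matrix.sub_mulVec, Matrix.one_mulVec] at h2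
    rw [← h2]; abel
  set w : ℕ → Fin n → ℝ := fun k => z k - zs with hwdef
  have hw : ∀ k, w k = (Mat ^ k).mulVec (w 0) := by
    intro k
    induction k with
    | zero => rw [pow_zero, Matrix.one_mulVec]
    | succ k ih =>
        have : w (k + 1) = Mat.mulVec (w k) := by
          rw [hwdef]
          simp only [horb k]
          rw [show Mat.mulVec (z k) + h - zs = Mat.mulVec (z k) + h - (Mat.mulVec zs + h) by
            rw [hfix]]
          rw [Matrix.mulVec_sub]
          abel
        rw [this, ih, Matrix.mulVec_mulVec, ← pow_succ']
  set y : ℕ → Fin n → ℂ := fun k i => ((w k i : ℝ) : ℂ) with hydef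
  have hy : ∀ k, y k = (A ^ k).mulVec (y 0) := by
    intro k
    funext i
    have hAk : (A ^ k) = (Mat ^ k).map Complex.ofReal := by
      have := map_pow
        (Complex.ofRealHom.mapMatrix : Matrix (Fin n) (Fin n) ℝ →+* Matrix (Fin n) (Fin n) ℂ)
        Mat k
      exact this.symm
    have h0 : y 0 = Complex.ofRealHom ∘ (w 0) := rfl
    rw [hAk, h0]
    have h2 : y k i = Complex.ofRealHom ((Mat ^ k *ᵥ w 0) i) :=
      congrArg Complex.ofRealHom (congrFun (hw k) i)
    exact h2.trans (RingHom.map_mulVec _ _ _ i)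
  obtain ⟨C, hC⟩ := isBounded_iff_forall_norm_le.mp hbdd
  have hC0 : 0 ≤ C := le_trans (norm_nonneg (z 0)) (hC (z 0) (Set.mem_range_self 0))
  have hyb : ∀ k, ‖y k‖ ≤ C + ‖zs‖ := by
    intro k
    rw [pi_norm_le_iff_of_nonneg (by positivity)]
    intro i
    calc ‖y k i‖ = ‖w k i‖ := by rw [hydef]; exact Complex.norm_real _
    _ ≤ ‖w k‖ := norm_le_pi_norm (w k) i
    _ = ‖z k - zs‖ := by rw [hwdef]
    _ ≤ ‖z k‖ + ‖zs‖ := norm_sub_le _ _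
    _ ≤ C + ‖zs‖ := by
        exact add_le_add (hC (z k) (Set.mem_range_self k)) le_rfl
  have hkey := key_matrix n A hspec (y 0) (C + ‖zs‖)
    (fun k => by rw [← hy]; exact hyb k)
  have hy0 : Tendsto y atTop (𝓝 0) := hkey.congr fun k => (hy k).symm
  rw [tendsto_pi_nhds]
  intro i
  have h5 : Tendsto (fun k => y k i) atTop (𝓝 0) := by
    have := tendsto_pi_nhds.mp hy0 i
    simpa using this
  have h6 : Tendsto (fun k => w k i) atTop (𝓝 0) := by
    have := (Complex.continuous_re.tendsto 0).comp h5
    simpa [hydef, Function.comp_def] using this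
  have h7 : Tendsto (fun k => z k i - zs i) atTop (𝓝 0) := by
    have : (fun k => w k i) = fun k => z k i - zs i := by
      funext k; rw [hwdef]; rfl
    rwa [this] at h6
  simpa using tendsto_sub_nhds_zero_iff.mp h7

end Main
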